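/- Let D, D' be two polyhedral scatterers with D ≠ D', with connected exteriors G = ℝ^N \ D and G' = ℝ^N \ D', and let G̃ be the connected component of ℝ^N \ (D ∪ D') containing the exterior of a large ball. If ∂G̃ ⊆ D ∩ D', then D = D' = ℝ^N \ G̃. -/

import Mathlib

open Metric Set

/-- A cell: the closure of a (relatively) open subset of an affine hyperplane. -/
def IsCell {N : ℕ} (C : Set (EuclideanSpace ℝ (Fin N))) : Prop :=
  ∃ (a : EuclideanSpace ℝ (Fin N)) (c : ℝ) (U : Set (EuclideanSpace ℝ (Fin N))),
    a ≠ 0 ∧ IsOpen U ∧ C = closure (U ∩ {x | (inner ℝ a x : ℝ) = c})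

/-- A polyhedral scatterer: a compact set with connected complement whose
boundary is a finite union of cells. -/
def IsPolyhedralScatterer {N : ℕ} (D : Set (EuclideanSpace ℝ (Fin N))) : Prop :=
  IsCompact D ∧ IsConnected Dᶜ ∧
    ∃ (n : ℕ) (C : Fin n → Set (EuclideanSpace ℝ (Fin N))),
      (∀ i, IsCell (C i)) ∧ frontier Dᶜ = ⋃ i, C i

/-- A preconnected set meeting an open set but not its frontier is contained in it. -/
lemma subset_of_disjoint_frontier {X : Type*} [TopologicalSpace X] {S U : Set X}
    (hS : IsPreconnected S) (hU : IsOpen U) (hdisj : Disjoint (frontier U) S)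
    (hne : (S ∩ U).Nonempty) : S ⊆ U := by
  have : PreconnectedSpace S := Subtype.preconnectedSpace hS
  have hclopen := isClopen_preimage_val hU hdisj
  obtain ⟨x, hxS, hxU⟩ := hne
  have huniv : (Subtype.val ⁻¹' U : Set S) = univ := hclopen.eq_univ ⟨⟨x, hxS⟩, hxU⟩
  intro y hy
  have : (⟨y, hy⟩ : S) ∈ (Subtype.val ⁻¹' U : Set S) := huniv ▸ mem_univ _
  exact this

/-- if the boundary of the unbounded component of the common
exterior of two polyhedral scatterers lies in both scatterers, the scatterers
coincide and equal the complement of that component. -/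
theorem stmt15 {N : ℕ} (D D' : Set (EuclideanSpace ℝ (Fin N)))
    (hD : IsPolyhedralScatterer D) (hD' : IsPolyhedralScatterer D')
    (hne : D ≠ D')
    (G' : Set (EuclideanSpace ℝ (Fin N)))
    (x₀ : EuclideanSpace ℝ (Fin N)) (hx₀ : x₀ ∈ (D ∪ D')ᶜ)
    (hG' : G' = connectedComponentIn (D ∪ D')ᶜ x₀)
    (R : ℝ) (hext : {x : EuclideanSpace ℝ (Fin N) | R < ‖x‖} ⊆ G')
    (hfront : frontier G' ⊆ D ∩ D') :
    D = D' ∧ D = G'ᶜ := by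
  rcases subsingleton_or_nontrivial (EuclideanSpace ℝ (Fin N)) with hsub | hnt
  · -- trivial space: both scatterers must be empty, contradicting hne
    have hempty : ∀ E : Set (EuclideanSpace ℝ (Fin N)), IsPolyhedralScatterer E → E = ∅ := by
      intro E hE
      obtain ⟨y, hy⟩ := hE.2.1.nonempty
      ext z
      simp only [mem_empty_iff_false, iff_false]
      intro hz
      exact hy (Subsingleton.elim z y ▸ hz)
    exact absurd ((hempty D hD).trans (hempty D' hD').symm) hne
  · have hDc : IsClosed D := hD.1.isClosed
    have hD'c : IsClosed D' := hD'.1.isClosed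
    have hopen : IsOpen (D ∪ D')ᶜ := (hDc.union hD'c).isOpen_compl
    have hG'open : IsOpen G' := hG' ▸ hopen.connectedComponentIn
    obtain ⟨C, hC⟩ := isBounded_iff_forall_norm_le.1 (hD.1.union hD'.1).isBounded
    obtain ⟨x, hx⟩ := NormedSpace.exists_lt_norm ℝ (EuclideanSpace ℝ (Fin N)) (max R C)
    have hxG' : x ∈ G' := hext (lt_of_le_of_lt (le_max_left _ _) hx)
    have hxD : x ∉ D ∪ D' := fun h =>
      absurd (hC x h) (not_le.2 (lt_of_le_of_lt (le_max_right _ _) hx))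
    -- Dᶜ ⊆ G'
    have key : ∀ E : Set (EuclideanSpace ℝ (Fin N)), IsPolyhedralScatterer E →
        frontier G' ⊆ E → x ∉ E → Eᶜ ⊆ G' := by
      intro E hE hfr hxE
      refine subset_of_disjoint_frontier hE.2.1.isPreconnected hG'open ?_ ⟨x, hxE, hxG'⟩
      exact disjoint_compl_right.mono_left hfr
    have h1 : Dᶜ ⊆ G' := key D hD (fun y hy => (hfront hy).1) (fun h => hxD (Or.inl h))
    have h2 : D'ᶜ ⊆ G' := key D' hD' (fun y hy => (hfront hy).2) (fun h => hxD (Or.inr h))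
    have h3 : G' ⊆ Dᶜ := by
      rw [hG']
      exact (connectedComponentIn_subset _ _).trans (compl_subset_compl.2 subset_union_left)
    have h4 : G' ⊆ D'ᶜ := by
      rw [hG']
      exact (connectedComponentIn_subset _ _).trans (compl_subset_compl.2 subset_union_right)
    have hDeq : Dᶜ = G' := subset_antisymm h1 h3
    have hD'eq : D'ᶜ = G' := subset_antisymm h2 h4
    have : D = G'ᶜ := by rw [← hDeq, compl_compl]
    exact ⟨by rw [this, ← hD'eq, compl_compl], this⟩
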